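/- Let V be a finite-dimensional complex vector space, and suppose 𝒜 = (A₀,…,A_{l-1}) and ℬ = (B₀,…,B_{m-1}) are finite sequences in End(V), each with trivial common kernel, such that the product sequence (with entry AᵢBⱼ at index lj+i) reduces, after deleting terms that do not decrease the partial common kernels, to the single-term sequence (id_V). If AᵢBⱼ = id_V is the first nonzero entry of the product (all earlier entries are zero), then Aᵢ, Bⱼ ∈ GL(V) and necessarily i = j = 0; hence A₀, B₀ ∈ GL(V). -/

import Mathlib

/-- The product of sequences of endomorphisms (first sequence of length `l`):
the entry at index `l*j + i` is `Aᵢ ∘ Bⱼ`. -/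
def seqMul {K V : Type*} [Field K] [AddCommGroup V] [Module K V]
    (l : ℕ) (f g : ℕ → Module.End K V) : ℕ → Module.End K V :=
  fun k => f (k % l) * g (k / l)

/-- If the product sequence of `𝒜` and `ℬ` has `AᵢBⱼ = id` as its first nonzero
entry, then `Aᵢ, Bⱼ ∈ GL(V)` and `i = j = 0`; hence `A₀, B₀ ∈ GL(V)`. -/
theorem stmt18 {V : Type*} [AddCommGroup V] [Module ℂ V] [FiniteDimensional ℂ V]
    (l m : ℕ) (hl : 0 < l) (hm : 0 < m) (f g : ℕ → Module.End ℂ V)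
    (hf : ⨅ i : Fin l, LinearMap.ker (f i) = ⊥)
    (hg : ⨅ j : Fin m, LinearMap.ker (g j) = ⊥)
    (hf0 : f 0 ≠ 0) (hg0 : g 0 ≠ 0)
    (i j : ℕ) (hi : i < l) (hj : j < m)
    (hid : f i * g j = 1)
    (hfirst : ∀ k < l * j + i, seqMul l f g k = 0) :
    IsUnit (f i) ∧ IsUnit (g j) ∧ i = 0 ∧ j = 0 ∧
      IsUnit (f 0) ∧ IsUnit (g 0) := by
  have hid' : g j * f i = 1 := mul_eq_one_comm.mp hid
  have hufi : IsUnit (f i) := ⟨⟨f i, g j, hid, hid'⟩, rfl⟩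
  have hugj : IsUnit (g j) := ⟨⟨g j, f i, hid', hid⟩, rfl⟩
  have hi0 : i = 0 := by
    by_contra h
    have hk : l * j < l * j + i := Nat.lt_add_of_pos_right (Nat.pos_of_ne_zero h)
    have := hfirst (l * j) hk
    unfold seqMul at this
    rw [Nat.mul_mod_right, Nat.mul_div_cancel_left _ hl] at this
    have : f 0 = 0 := by
      have h2 : f 0 * g j * f i = 0 := by rw [this]; simp
      rw [mul_assoc, hid', mul_one] at h2
      exact h2
    exact hf0 this
  have hj0 : j = 0 := by
    by_contra h
    have hk : i < l * j + i := by
      have : 0 < l * j := Nat.mul_pos hl (Nat.pos_of_ne_zero h)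
      omega
    have := hfirst i hk
    unfold seqMul at this
    rw [Nat.mod_eq_of_lt hi, Nat.div_eq_of_lt hi] at this
    have : g 0 = 0 := by
      have h2 : g j * (f i * g 0) = 0 := by rw [this]; simp
      rw [← mul_assoc, hid', one_mul] at h2
      exact h2
    exact hg0 this
  exact ⟨hufi, hugj, hi0, hj0, hi0 ▸ hufi, hj0 ▸ hugj⟩
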